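/- Let g(x) = ∏_{i=1}^{N} (1 - c_i ∂_x) x^k be applied to x^k, where c_i > 0 and k ≤ N. Then the smallest root of g satisfies λ_min(g) ≥ -(k-1)/α + Σ_{i=1}^{N} 1/(1/c_i + α) for every α > 0. -/

import Mathlib

open Polynomial BigOperators Finset

namespace BarrierAux

variable {F : Type*} [Field F]

noncomputable def pOf (Λ : Multiset F) : Polynomial F := (Λ.map (fun a => X - C a)).prod

lemma eval_pOf (Λ : Multiset F) (t : F) :
    (pOf Λ).eval t = (Λ.map (fun a => t - a)).prod := by
  simp [pOf, eval_multiset_prod, Multiset.map_map, Function.comp]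

lemma eval_pOf_ne_zero {Λ : Multiset F} {t : F} (h : ∀ a ∈ Λ, t ≠ a) :
    (pOf Λ).eval t ≠ 0 := by
  rw [eval_pOf]
  apply Multiset.prod_ne_zero
  simp only [Multiset.mem_map]
  rintro ⟨a, ha, h0⟩
  exact h a ha (sub_eq_zero.mp h0)

lemma pOf_cons (a : F) (T : Multiset F) :
    pOf (a ::ₘ T) = (X - C a) * pOf T := by
  simp [pOf]

lemma eval_derivative_pOf (Λ : Multiset F) (t : F) (h : ∀ a ∈ Λ, t ≠ a) :
    (derivative (pOf Λ)).eval t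
      = (pOf Λ).eval t * (Λ.map (fun a => (t - a)⁻¹)).sum := by
  induction Λ using Multiset.induction with
  | empty => simp [pOf]
  | cons a T ih =>
    have ha : t - a ≠ 0 := sub_ne_zero.mpr (h a (Multiset.mem_cons_self a T))
    have hT : ∀ x ∈ T, t ≠ x := fun x hx => h x (Multiset.mem_cons_of_mem hx)
    rw [pOf_cons, derivative_mul]
    simp only [derivative_sub, derivative_X, derivative_C, sub_zero, one_mul,
      eval_add, eval_mul, eval_sub, eval_X, eval_C, Multiset.map_cons,
      Multiset.sum_cons, ih hT]
    field_simp

lemma eval_derivative2_pOf (Λ : Multiset F) (t : F) (h : ∀ a ∈ Λ, t ≠ a) :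
    (derivative (derivative (pOf Λ))).eval t
      = (pOf Λ).eval t *
        (((Λ.map (fun a => (t - a)⁻¹)).sum) ^ 2
          - (Λ.map (fun a => ((t - a)⁻¹) ^ 2)).sum) := by
  induction Λ using Multiset.induction with
  | empty => simp [pOf]
  | cons a T ih =>
    have ha : t - a ≠ 0 := sub_ne_zero.mpr (h a (Multiset.mem_cons_self a T))
    have hT : ∀ x ∈ T, t ≠ x := fun x hx => h x (Multiset.mem_cons_of_mem hx)
    rw [pOf_cons, derivative_mul, derivative_add, derivative_mul, derivative_mul]
    simp only [derivative_sub, derivative_X, derivative_C, sub_zero, one_mul,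
      derivative_one, zero_mul, derivative_add, eval_add, eval_mul, eval_sub,
      eval_X, eval_C, Multiset.map_cons, Multiset.sum_cons,
      eval_derivative_pOf T t hT, ih hT, eval_zero]
    generalize (Multiset.map (fun a => (t - a)⁻¹ ^ 2) T).sum = S2
    field_simp
    ring

lemma monic_pOf (Λ : Multiset F) : (pOf Λ).Monic :=
  monic_multiset_prod_of_monic _ _ (fun a _ => monic_X_sub_C a)

lemma map_pOf {K : Type*} [Field K] (f : F →+* K) (Λ : Multiset F) :
    (pOf Λ).map f = pOf (Λ.map f) := by
  simp [pOf, Polynomial.map_multiset_prod, Multiset.map_map, Function.comp]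

lemma msum_neg (m : Multiset F) (f : F → F) :
    (m.map (fun x => -(f x))).sum = -((m.map f).sum) := by
  induction m using Multiset.induction with
  | empty => simp
  | cons a T ih => simp [ih]; ring

lemma cheb (Λ : Multiset ℝ) (s r : ℝ → ℝ)
    (h : ∀ x ∈ Λ, ∀ y ∈ Λ,
      s x * r x * s y + s y * r y * s x ≤ s x * s x * r y + s y * s y * r x) :
    (Λ.map (fun x => s x * r x)).sum * (Λ.map s).sum
      ≤ (Λ.map (fun x => s x * s x)).sum * (Λ.map r).sum := by
  induction Λ using Multiset.induction with
  | empty => simp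
  | cons a T ih =>
    have hmemT : ∀ x ∈ T, x ∈ a ::ₘ T := fun x hx => Multiset.mem_cons_of_mem hx
    have haM : a ∈ a ::ₘ T := Multiset.mem_cons_self a T
    have ihT := ih (fun x hx y hy => h x (hmemT x hx) y (hmemT y hy))
    have cross : (T.map (fun y => s a * r a * s y + s y * r y * s a)).sum
        ≤ (T.map (fun y => s a * s a * r y + s y * s y * r a)).sum :=
      Multiset.sum_map_le_sum_map _ _ (fun y hy => h a haM y (hmemT y hy))
    have e1 : (T.map (fun y => s a * r a * s y + s y * r y * s a)).sum
        = s a * r a * (T.map s).sum + (T.map (fun y => s y * r y)).sum * s a := by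
      rw [Multiset.sum_map_add]
      congr 1
      · exact Multiset.sum_map_mul_left
      · exact Multiset.sum_map_mul_right
    have e2 : (T.map (fun y => s a * s a * r y + s y * s y * r a)).sum
        = s a * s a * (T.map r).sum + (T.map (fun y => s y * s y)).sum * r a := by
      rw [Multiset.sum_map_add]
      congr 1
      · exact Multiset.sum_map_mul_left
      · exact Multiset.sum_map_mul_right
    simp only [Multiset.map_cons, Multiset.sum_cons]
    nlinarith [ihT, cross, e1, e2]

lemma im_multiset_sum (m : Multiset ℂ) : m.sum.im = (m.map Complex.im).sum := by
  induction m using Multiset.induction with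
  | empty => simp
  | cons a T ih => simp [ih]

set_option maxHeartbeats 2000000 in
lemma step (α cc b : ℝ) (hα : 0 < α) (hcc : 0 < cc) (Λ : Multiset ℝ)
    (hb : ∀ a ∈ Λ, b < a)
    (hΦ : (Λ.map (fun a => (a - b)⁻¹)).sum ≤ α) :
    ∃ M : Multiset ℝ,
      pOf Λ - C cc * derivative (pOf Λ) = pOf M ∧
      (∀ μ ∈ M, b + (cc⁻¹ + α)⁻¹ < μ) ∧
      (M.map (fun μ => (μ - (b + (cc⁻¹ + α)⁻¹))⁻¹)).sum ≤ α := by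
  set δ : ℝ := (cc⁻¹ + α)⁻¹ with hδdef
  set t : ℝ := b + δ with htdef
  have hccα : 0 < cc⁻¹ + α := by positivity
  have hδpos : 0 < δ := by positivity
  have hδα : δ < α⁻¹ := by
    rw [hδdef]
    apply inv_strictAnti₀ hα
    have : 0 < cc⁻¹ := by positivity
    linarith
  have hterm : ∀ a ∈ Λ, 0 < (a - b)⁻¹ := fun a ha => inv_pos.mpr (by linarith [hb a ha])
  have hgap : ∀ a ∈ Λ, b + α⁻¹ ≤ a := by
    intro a ha
    have h1 : (a - b)⁻¹ ≤ α := by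
      refine le_trans ?_ hΦ
      refine Multiset.single_le_sum ?_ _ (Multiset.mem_map_of_mem _ ha)
      intro x hx
      obtain ⟨y, hy, rfl⟩ := Multiset.mem_map.mp hx
      exact (hterm y hy).le
    have h2 : α⁻¹ ≤ ((a - b)⁻¹)⁻¹ := inv_anti₀ (hterm a ha) h1
    rw [inv_inv] at h2
    linarith
  have hta : ∀ a ∈ Λ, t < a := by
    intro a ha
    have := hgap a ha
    rw [htdef]
    linarith
  have keyReal : ∀ x : ℝ, x ≤ t → (pOf Λ - C cc * derivative (pOf Λ)).eval x ≠ 0 := by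
    intro x hx
    have hxa : ∀ a ∈ Λ, x ≠ a := fun a ha => ne_of_lt (lt_of_le_of_lt hx (hta a ha))
    have hP := eval_pOf_ne_zero hxa
    have hS : (Λ.map (fun a => (x - a)⁻¹)).sum ≤ 0 := by
      have h0 : (Λ.map (fun a => (x - a)⁻¹)).sum ≤ (Λ.map (fun _ => (0:ℝ))).sum := by
        refine Multiset.sum_map_le_sum_map _ _ (fun a ha => ?_)
        have hxalt : x - a < 0 := by linarith [lt_of_le_of_lt hx (hta a ha)]
        exact le_of_lt (inv_lt_zero.mpr hxalt)
      simpa using h0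
    rw [eval_sub, eval_mul, eval_C, eval_derivative_pOf Λ x hxa]
    have factored : (pOf Λ).eval x - cc * ((pOf Λ).eval x * (Λ.map (fun a => (x - a)⁻¹)).sum)
        = (pOf Λ).eval x * (1 - cc * (Λ.map (fun a => (x - a)⁻¹)).sum) := by ring
    rw [factored]
    refine mul_ne_zero hP (by nlinarith)
  set q : Polynomial ℝ := pOf Λ - C cc * derivative (pOf Λ) with hqdef
  have hq_monic : q.Monic := by
    have hp := monic_pOf Λ
    have h1 : degree (C cc * derivative (pOf Λ)) ≤ degree (derivative (pOf Λ)) := by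
      rw [← smul_eq_C_mul]; exact degree_smul_le _ _
    exact hp.sub_of_left (lt_of_le_of_lt h1 (degree_derivative_lt hp.ne_zero))
  set ΛC : Multiset ℂ := Λ.map (fun r : ℝ => (r : ℂ)) with hΛC
  have hmapq : q.map Complex.ofRealHom = pOf ΛC - C ((cc:ℝ):ℂ) * derivative (pOf ΛC) := by
    rw [hqdef, Polynomial.map_sub, Polynomial.map_mul, Polynomial.map_C, ← derivative_map,
      map_pOf]
    rfl
  have hsplits : (q.map Complex.ofRealHom).Splits := IsAlgClosed.splits _
  have hfact : q.map Complex.ofRealHom = pOf ((q.map Complex.ofRealHom).roots) :=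
    hsplits.eq_prod_roots_of_monic (hq_monic.map _)
  set R : Multiset ℂ := (q.map Complex.ofRealHom).roots with hR
  have hccC : ((cc:ℝ):ℂ) ≠ 0 := by exact_mod_cast hcc.ne'
  have hreal : ∀ z ∈ R, z.im = 0 := by
    intro z hz
    have hz0 : (q.map Complex.ofRealHom).eval z = 0 := by
      have := (Polynomial.mem_roots'.mp hz).2
      exact this
    rw [hmapq] at hz0
    by_cases hPz : ∀ a ∈ ΛC, z ≠ a
    · rw [eval_sub, eval_mul, eval_C, eval_derivative_pOf ΛC z hPz] at hz0
      have hP := eval_pOf_ne_zero hPz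
      set S : ℂ := (ΛC.map (fun a => (z - a)⁻¹)).sum with hSdef
      have h1 : (pOf ΛC).eval z * (1 - ((cc:ℝ):ℂ) * S) = 0 := by linear_combination hz0
      have h2 : (1 : ℂ) - ((cc:ℝ):ℂ) * S = 0 := by
        rcases mul_eq_zero.mp h1 with h | h
        · exact absurd h hP
        · exact h
      have hSval : S = ((cc:ℝ):ℂ)⁻¹ := by
        have hm : S * ((cc:ℝ):ℂ) = 1 := by linear_combination -h2
        exact eq_inv_of_mul_eq_one_left hm
      have hΛne : Λ ≠ 0 := by
        intro h0
        have hC0 : ΛC = 0 := by rw [hΛC, h0]; simp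
        rw [hSdef, hC0] at hSval
        simp at hSval
        exact hccC (by exact_mod_cast hSval.symm)
      have him : S.im = 0 := by
        rw [hSval, ← Complex.ofReal_inv]
        simp
      rw [hSdef, im_multiset_sum, Multiset.map_map, hΛC, Multiset.map_map] at him
      have hcongr : ∀ r ∈ Λ, ((Complex.im ∘ fun a => (z - a)⁻¹) ∘ (fun r : ℝ => (r:ℂ))) r
            = -z.im * (Complex.normSq (z - (r:ℂ)))⁻¹ := by
        intro r hr
        have hsub : (z - (r:ℂ)).im = z.im := by simp
        rw [Function.comp_apply, Function.comp_apply, Complex.inv_im, hsub, div_eq_mul_inv]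
      rw [Multiset.map_congr rfl hcongr, Multiset.sum_map_mul_left] at him
      by_contra him0
      have hT : (Λ.map (fun r : ℝ => (Complex.normSq (z - (r:ℂ)))⁻¹)).sum = 0 := by
        rcases mul_eq_zero.mp him with h | h
        · exact absurd (neg_eq_zero.mp h) him0
        · exact h
      obtain ⟨a, ha⟩ := Multiset.exists_mem_of_ne_zero hΛne
      have hza : z - (a:ℂ) ≠ 0 := by
        intro h0
        apply him0
        have := congrArg Complex.im h0
        simpa using this
      have hpos : 0 < (Complex.normSq (z - (a:ℂ)))⁻¹ :=
        inv_pos.mpr (Complex.normSq_pos.mpr hza)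
      have hle : (Complex.normSq (z - (a:ℂ)))⁻¹
          ≤ (Λ.map (fun r : ℝ => (Complex.normSq (z - (r:ℂ)))⁻¹)).sum := by
        refine Multiset.single_le_sum ?_ _ (Multiset.mem_map_of_mem _ ha)
        intro x hx
        obtain ⟨y, hy, rfl⟩ := Multiset.mem_map.mp hx
        exact inv_nonneg.mpr (Complex.normSq_nonneg _)
      rw [hT] at hle
      linarith
    · push_neg at hPz
      obtain ⟨a, ha, hza⟩ := hPz
      subst hza
      obtain ⟨r, hr, rfl⟩ := Multiset.mem_map.mp ha
      simp
  set M : Multiset ℝ := R.map Complex.re with hM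
  have hMC : M.map (fun r : ℝ => (r:ℂ)) = R := by
    rw [hM, Multiset.map_map]
    have hcg : ∀ z ∈ R, ((fun r : ℝ => (r:ℂ)) ∘ Complex.re) z = id z := by
      intro z hz
      have hzi := hreal z hz
      apply Complex.ext <;> simp [hzi]
    rw [Multiset.map_congr rfl hcg, Multiset.map_id]
  have q_eq : q = pOf M := by
    apply Polynomial.map_injective Complex.ofRealHom Complex.ofReal_injective
    rw [map_pOf]
    have hMR : M.map ⇑Complex.ofRealHom = R := by
      rw [← hMC]
      apply Multiset.map_congr rfl
      intro x _
      simp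
    rw [hMR, ← hfact]
  have hmem : ∀ μ ∈ M, t < μ := by
    intro μ hμ
    by_contra hle
    push_neg at hle
    apply keyReal μ hle
    show q.eval μ = 0
    rw [q_eq, eval_pOf]
    apply Multiset.prod_eq_zero
    exact Multiset.mem_map.mpr ⟨μ, hμ, sub_self μ⟩
  have htμ : ∀ μ ∈ M, t ≠ μ := fun μ hμ => ne_of_lt (hmem μ hμ)
  have hta' : ∀ a ∈ Λ, t ≠ a := fun a ha => ne_of_lt (hta a ha)
  have hP := eval_pOf_ne_zero hta'
  set P : ℝ := (pOf Λ).eval t with hPdef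
  set σ1 : ℝ := (Λ.map (fun a => (a - t)⁻¹)).sum with hσ1
  set σ2 : ℝ := (Λ.map (fun a => (a - t)⁻¹ * (a - t)⁻¹)).sum with hσ2
  set ρ1 : ℝ := (Λ.map (fun a => (a - b)⁻¹)).sum with hρ1
  set SR : ℝ := (Λ.map (fun a => (a - t)⁻¹ * (a - b)⁻¹)).sum with hSR
  set SM : ℝ := (M.map (fun μ => (t - μ)⁻¹)).sum with hSM
  have hS_eq : (Λ.map (fun a => (t - a)⁻¹)).sum = -σ1 := by
    rw [hσ1, ← msum_neg]
    apply congrArg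
    apply Multiset.map_congr rfl
    intro a _
    rw [show t - a = -(a - t) by ring, inv_neg]
  have hS2_eq : (Λ.map (fun a => ((t - a)⁻¹) ^ 2)).sum = σ2 := by
    rw [hσ2]
    apply congrArg
    apply Multiset.map_congr rfl
    intro a _
    rw [show t - a = -(a - t) by ring, inv_neg]
    ring
  have e2 : q.eval t = P * (1 + cc * σ1) := by
    rw [hqdef, eval_sub, eval_mul, eval_C, eval_derivative_pOf Λ t hta', hS_eq, ← hPdef]
    ring
  have e3 : (derivative q).eval t = P * (-σ1) - cc * (P * (σ1 ^ 2 - σ2)) := by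
    rw [hqdef]
    rw [derivative_sub, derivative_C_mul]
    rw [eval_sub, eval_mul, eval_C, eval_derivative_pOf Λ t hta',
      eval_derivative2_pOf Λ t hta', hS_eq, hS2_eq, ← hPdef]
    ring
  have e1 : (derivative q).eval t = q.eval t * SM := by
    conv_lhs => rw [q_eq]
    conv_rhs => rw [q_eq]
    rw [eval_derivative_pOf M t htμ, hSM]
  have hE2 : (-σ1) - cc * (σ1 ^ 2 - σ2) = (1 + cc * σ1) * SM := by
    apply mul_left_cancel₀ hP
    have := e1
    rw [e2, e3] at this
    linear_combination this
  -- positivity facts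
  have hσ1nn : 0 ≤ σ1 := by
    rw [hσ1]
    apply Multiset.sum_nonneg
    intro x hx
    obtain ⟨a, ha, rfl⟩ := Multiset.mem_map.mp hx
    exact inv_nonneg.mpr (by linarith [hta a ha])
  have hσ2nn : 0 ≤ σ2 := by
    rw [hσ2]
    apply Multiset.sum_nonneg
    intro x hx
    obtain ⟨a, ha, rfl⟩ := Multiset.mem_map.mp hx
    exact mul_nonneg (inv_nonneg.mpr (by linarith [hta a ha]))
      (inv_nonneg.mpr (by linarith [hta a ha]))
  have hρ1nn : 0 ≤ ρ1 := by
    rw [hρ1]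
    apply Multiset.sum_nonneg
    intro x hx
    obtain ⟨a, ha, rfl⟩ := Multiset.mem_map.mp hx
    exact (hterm a ha).le
  have hSRnn : 0 ≤ SR := by
    rw [hSR]
    apply Multiset.sum_nonneg
    intro x hx
    obtain ⟨a, ha, rfl⟩ := Multiset.mem_map.mp hx
    exact mul_nonneg (inv_nonneg.mpr (by linarith [hta a ha]))
      (inv_nonneg.mpr (by linarith [hb a ha]))
  have hQpos : 0 < 1 + cc * σ1 := by nlinarith
  have hsplit : σ1 = ρ1 + δ * SR := by
    rw [hσ1, hρ1, hSR]
    have hcg : ∀ a ∈ Λ, (a - t)⁻¹ = (a - b)⁻¹ + δ * ((a - t)⁻¹ * (a - b)⁻¹) := by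
      intro a ha
      have h1 : a - t ≠ 0 := sub_ne_zero.mpr (ne_of_gt (hta a ha))
      have h2 : a - b ≠ 0 := sub_ne_zero.mpr (ne_of_gt (hb a ha))
      have ht' : t = b + δ := htdef
      field_simp
      rw [ht']
      ring
    rw [Multiset.map_congr rfl hcg, Multiset.sum_map_add, Multiset.sum_map_mul_left]
  have hcheb : SR * σ1 ≤ σ2 * ρ1 := by
    rw [hSR, hσ1, hσ2, hρ1]
    apply cheb Λ (fun a => (a - t)⁻¹) (fun a => (a - b)⁻¹)
    intro x hx y hy
    have hxt : 0 < x - t := sub_pos.mpr (hta x hx)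
    have hyt : 0 < y - t := sub_pos.mpr (hta y hy)
    have hxb : 0 < x - b := sub_pos.mpr (hb x hx)
    have hyb : 0 < y - b := sub_pos.mpr (hb y hy)
    have hbt : t - b = δ := by rw [htdef]; ring
    have key : ((x - t)⁻¹ * (x - t)⁻¹ * (y - b)⁻¹ + (y - t)⁻¹ * (y - t)⁻¹ * (x - b)⁻¹)
        - ((x - t)⁻¹ * (x - b)⁻¹ * (y - t)⁻¹ + (y - t)⁻¹ * (y - b)⁻¹ * (x - t)⁻¹)
        = (t - b) * (y - x) ^ 2 * ((x - t)⁻¹ * (y - t)⁻¹) ^ 2 * ((x - b)⁻¹ * (y - b)⁻¹) := by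
      field_simp
      ring
    have h0 : 0 ≤ (t - b) * (y - x) ^ 2 * ((x - t)⁻¹ * (y - t)⁻¹) ^ 2 * ((x - b)⁻¹ * (y - b)⁻¹) := by
      rw [hbt]
      positivity
    linarith [key, h0]
  have hSRσ2 : SR ≤ σ2 := by
    rw [hSR, hσ2]
    refine Multiset.sum_map_le_sum_map _ _ (fun a ha => ?_)
    have h1 : 0 < a - t := sub_pos.mpr (hta a ha)
    have h2 : a - t ≤ a - b := by
      rw [htdef]; linarith
    have h3 : (a - b)⁻¹ ≤ (a - t)⁻¹ := inv_anti₀ h1 h2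
    have h4 : 0 ≤ (a - t)⁻¹ := by positivity
    exact mul_le_mul_of_nonneg_left h3 h4
  have hδcc : δ * (1 + cc * α) = cc := by
    rw [hδdef]
    field_simp
  have htarget : σ1 + cc * σ1 ^ 2 - cc * σ2 ≤ α * (1 + cc * σ1) := by
    have t1 : σ1 - α ≤ δ * SR := by
      rw [hsplit] at *
      linarith [hΦ]
    have t2 : (σ1 - α) * (1 + cc * σ1) ≤ (δ * SR) * (1 + cc * σ1) :=
      mul_le_mul_of_nonneg_right t1 hQpos.le
    have t3 : (δ * cc) * (SR * σ1) ≤ (δ * cc) * (σ2 * ρ1) :=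
      mul_le_mul_of_nonneg_left hcheb (mul_nonneg hδpos.le hcc.le)
    have t4 : (δ * cc * σ2) * ρ1 ≤ (δ * cc * σ2) * α := by
      apply mul_le_mul_of_nonneg_left _ (mul_nonneg (mul_nonneg hδpos.le hcc.le) hσ2nn)
      rw [hρ1]; exact hΦ
    have t5 : δ * SR ≤ δ * σ2 := mul_le_mul_of_nonneg_left hSRσ2 hδpos.le
    have t6 : δ * σ2 + δ * cc * α * σ2 = cc * σ2 := by linear_combination σ2 * hδcc
    nlinarith [t2, t3, t4, t5, t6]
  refine ⟨M, q_eq, hmem, ?_⟩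
  have hΦM : (M.map (fun μ => (μ - t)⁻¹)).sum = -SM := by
    rw [hSM, ← msum_neg]
    apply congrArg
    apply Multiset.map_congr rfl
    intro μ _
    rw [show μ - t = -(t - μ) by ring, inv_neg]
  rw [hΦM]
  nlinarith [hE2, htarget, hQpos, mul_pos hQpos hα]



lemma main (α : ℝ) (hα : 0 < α) (c : ℕ → ℝ) :
    ∀ (L : List ℕ), (∀ i ∈ L, 0 < c i) → ∀ (b : ℝ) (Λ : Multiset ℝ),
      (∀ a ∈ Λ, b < a) → (Λ.map (fun a => (a - b)⁻¹)).sum ≤ α →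
      ∃ M : Multiset ℝ,
        L.foldr (fun i q => q - C (c i) * derivative q) (pOf Λ) = pOf M ∧
        (∀ μ ∈ M, b + (L.map (fun i => ((c i)⁻¹ + α)⁻¹)).sum < μ) ∧
        (M.map (fun μ => (μ - (b + (L.map (fun i => ((c i)⁻¹ + α)⁻¹)).sum))⁻¹)).sum ≤ α := by
  intro L
  induction L with
  | nil =>
    intro _ b Λ hb hΦ
    exact ⟨Λ, by simp, by simpa using hb, by simpa using hΦ⟩
  | cons i L' ih =>
    intro hL b Λ hb hΦ
    obtain ⟨M', hM'eq, hM'mem, hM'Φ⟩ :=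
      ih (fun j hj => hL j (List.mem_cons_of_mem _ hj)) b Λ hb hΦ
    set b' : ℝ := b + (L'.map (fun i => ((c i)⁻¹ + α)⁻¹)).sum with hb'
    obtain ⟨M, hMeq, hMmem, hMΦ⟩ :=
      step α (c i) b' hα (hL i (List.mem_cons_self)) M' hM'mem hM'Φ
    have harith : b + ((i :: L').map (fun i => ((c i)⁻¹ + α)⁻¹)).sum
        = b' + ((c i)⁻¹ + α)⁻¹ := by
      rw [hb', List.map_cons, List.sum_cons]; ring
    refine ⟨M, ?_, ?_, ?_⟩
    · rw [List.foldr_cons, hM'eq, hMeq]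
    · intro μ hμ
      rw [harith]
      exact hMmem μ hμ
    · rw [harith]
      exact hMΦ

lemma list_range_sum (f : ℕ → ℝ) (n : ℕ) :
    ((List.range n).map f).sum = ∑ i ∈ Finset.range n, f i := by
  induction n with
  | zero => simp
  | succ m ih =>
    rw [List.range_succ, List.map_append, List.sum_append, Finset.sum_range_succ, ih]
    simp

end BarrierAux

open BarrierAux in
/-- Barrier bound for the smallest root of `g = ∏_{i=1}^N (1 - c_i ∂_x) x^k`:
for every `α > 0`, every real root of `g` is at least
`-(k-1)/α + ∑_{i=1}^N 1/(1/c_i + α)`. -/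
theorem barrier_bound_smallest_root
    (N k : ℕ) (hk : k ≤ N) (c : ℕ → ℝ) (hc : ∀ i, i < N → 0 < c i)
    (α : ℝ) (hα : 0 < α) :
    ∀ x ∈ ((List.range N).foldr
        (fun i q => q - C (c i) * derivative q) ((X : Polynomial ℝ) ^ k)).roots,
      -((k : ℝ) - 1) / α + ∑ i ∈ Finset.range N, 1 / ((c i)⁻¹ + α) ≤ x := by
  intro x hx
  have hp0 : pOf (Multiset.replicate k (0:ℝ)) = X ^ k := by
    rw [pOf, Multiset.map_replicate, Multiset.prod_replicate]
    simp
  have hb0 : ∀ a ∈ Multiset.replicate k (0:ℝ), -(k:ℝ)/α < a := by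
    intro a ha
    obtain ⟨hk0, rfl⟩ := Multiset.mem_replicate.mp ha
    have hkR : (0:ℝ) < k := by exact_mod_cast Nat.pos_of_ne_zero hk0
    have : 0 < (k:ℝ)/α := by positivity
    rw [neg_div]
    linarith
  have hΦ0 : ((Multiset.replicate k (0:ℝ)).map (fun a => (a - (-(k:ℝ)/α))⁻¹)).sum ≤ α := by
    rcases Nat.eq_zero_or_pos k with hk0 | hk0
    · subst hk0
      simpa using hα.le
    · have hkR : (0:ℝ) < k := by exact_mod_cast hk0
      rw [Multiset.map_replicate, Multiset.sum_replicate]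
      simp only [nsmul_eq_mul]
      rw [show ((0:ℝ) - (-(k:ℝ)/α))⁻¹ = α/k by rw [zero_sub, neg_div, neg_neg, inv_div]]
      rw [show (k:ℝ) * (α/k) = α by field_simp]
  obtain ⟨M, hfold, hmem, hΦM⟩ :=
    main α hα c (List.range N) (fun i hi => hc i (List.mem_range.mp hi))
      (-(k:ℝ)/α) (Multiset.replicate k 0) hb0 hΦ0
  rw [hp0] at hfold
  rw [hfold] at hx
  have hroot : (pOf M).eval x = 0 := (Polynomial.mem_roots'.mp hx).2
  rw [eval_pOf] at hroot
  have h0mem : (0:ℝ) ∈ M.map (fun a => x - a) := Multiset.prod_eq_zero_iff.mp hroot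
  obtain ⟨y, hyM, hy0⟩ := Multiset.mem_map.mp h0mem
  have hxM : x ∈ M := by
    have : x = y := sub_eq_zero.mp hy0
    rw [this]; exact hyM
  set B : ℝ := -(k:ℝ)/α + ((List.range N).map (fun i => ((c i)⁻¹ + α)⁻¹)).sum with hB
  have h1 : B < x := hmem x hxM
  have h2 : (x - B)⁻¹ ≤ α := by
    refine le_trans ?_ hΦM
    refine Multiset.single_le_sum ?_ _ (Multiset.mem_map_of_mem _ hxM)
    intro u hu
    obtain ⟨y, hy, rfl⟩ := Multiset.mem_map.mp hu
    exact inv_nonneg.mpr (by linarith [hmem y hy])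
  have h3 : α⁻¹ ≤ x - B := by
    have hpos : 0 < (x - B)⁻¹ := inv_pos.mpr (by linarith)
    have := inv_anti₀ hpos h2
    rwa [inv_inv] at this
  have hsum : ((List.range N).map (fun i => ((c i)⁻¹ + α)⁻¹)).sum
      = ∑ i ∈ Finset.range N, ((c i)⁻¹ + α)⁻¹ := list_range_sum _ N
  have hid : -((k:ℝ) - 1)/α = -(k:ℝ)/α + α⁻¹ := by
    field_simp
    ring
  simp only [one_div]
  rw [hB, hsum] at h3
  linarith [h3, hid]
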